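/- Let (X,d) be a complete metric space and T : X → X. Suppose there exist a, b ∈ [0,∞) with a + 2b < 1 and K : [0,∞) → [0,∞) with K(0) = 0 and K(t) → 0 as t → 0, such that d(Tx,Ty) ≤ a·d(x,y) + b·[d(x,Tx) + d(y,Ty)] + K(d(Tx,y)) for all x,y ∈ X. Put λ := (a+b)/(1−b), so λ < 1. Then for every u ∈ X the sequence (Tⁿu; n ≥ 0) converges to some point T^∞u ∈ Fix(T), and the error estimate d(Tⁿu, T^∞u) ≤ [λⁿ/(1−λ)]·d(u, Tu) holds for all n ≥ 0. -/

import Mathlib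

open Filter Topology

/-- **Theorem 5 with the error estimate (4.3).** Let `(X,d)` be complete and
`T : X → X`. Suppose there are `a, b ≥ 0` with `a + 2b < 1`, and
`K : [0,∞) → [0,∞)` with `K(0) = 0` and `K(t) → 0` as `t → 0` (within `[0,∞)`),
such that `d(Tx,Ty) ≤ a·d(x,y) + b·[d(x,Tx) + d(y,Ty)] + K(d(Tx,y))` for all
`x,y`. Put `λ := (a+b)/(1−b)`; then `λ < 1`, and for every `u` the orbit
`(Tⁿu)` converges to a fixed point `T^∞u` of `T`, with
`d(Tⁿu, T^∞u) ≤ [λⁿ/(1−λ)]·d(u, Tu)` for all `n`. -/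
theorem K_perturbed_contraction_error_estimate {X : Type*} [MetricSpace X]
    [CompleteSpace X] (T : X → X) (a b : ℝ) (K : ℝ → ℝ)
    (ha : 0 ≤ a) (hb : 0 ≤ b) (hK0 : ∀ t, 0 ≤ t → 0 ≤ K t)
    (hab : a + 2 * b < 1) (hKzero : K 0 = 0)
    (hKlim : Tendsto K (𝓝[≥] (0 : ℝ)) (𝓝 0))
    (hcontr : ∀ x y : X, dist (T x) (T y) ≤ a * dist x y
      + b * (dist x (T x) + dist y (T y)) + K (dist (T x) y)) :
    (a + b) / (1 - b) < 1 ∧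
    ∀ u : X, ∃ z : X,
      Tendsto (fun n : ℕ => T^[n] u) atTop (𝓝 z) ∧ z = T z ∧
      ∀ n : ℕ, dist (T^[n] u) z
        ≤ ((a + b) / (1 - b)) ^ n / (1 - (a + b) / (1 - b)) * dist u (T u) := by
  have h1b : 0 < 1 - b := by linarith
  set lam := (a + b) / (1 - b) with hlam
  have hlam_nonneg : 0 ≤ lam := div_nonneg (by linarith) h1b.le
  have hlam_lt : lam < 1 := by
    rw [hlam, div_lt_one h1b]; linarith
  refine ⟨hlam_lt, fun u => ?_⟩
  -- one-step contraction along the orbit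
  have step : ∀ x : X, dist (T x) (T (T x)) ≤ lam * dist x (T x) := by
    intro x
    have h := hcontr x (T x)
    rw [dist_self, hKzero] at h
    rw [hlam, div_mul_eq_mul_div, le_div_iff₀ h1b]
    nlinarith [dist_nonneg (x := x) (y := T x)]
  set f : ℕ → X := fun n => T^[n] u with hf
  have hfs : ∀ n, f (n + 1) = T (f n) := fun n => Function.iterate_succ_apply' T n u
  have key : ∀ n, dist (f n) (f (n + 1)) ≤ dist u (T u) * lam ^ n := by
    intro n
    induction n with
    | zero => simp [hf]
    | succ n ih =>
      have h1 : dist (f (n + 1)) (f (n + 2)) ≤ lam * dist (f n) (f (n + 1)) := by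
        rw [hfs (n + 1), hfs n]
        exact step (f n)
      calc dist (f (n + 1)) (f (n + 2)) ≤ lam * dist (f n) (f (n + 1)) := h1
        _ ≤ lam * (dist u (T u) * lam ^ n) := by
            exact mul_le_mul_of_nonneg_left ih hlam_nonneg
        _ = dist u (T u) * lam ^ (n + 1) := by ring
  have hcau : CauchySeq f := cauchySeq_of_le_geometric lam (dist u (T u)) hlam_lt key
  obtain ⟨z, hz⟩ := cauchySeq_tendsto_of_complete hcau
  have hdz : Tendsto (fun n => dist (f n) z) atTop (𝓝 0) :=
    tendsto_iff_dist_tendsto_zero.mp hz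
  have hdz1 : Tendsto (fun n => dist (f (n + 1)) z) atTop (𝓝 0) :=
    hdz.comp (tendsto_add_atTop_nat 1)
  have hKz : Tendsto (fun n => K (dist (f (n + 1)) z)) atTop (𝓝 0) := by
    have : Tendsto (K ∘ fun n => dist (f (n + 1)) z) atTop (𝓝 (K 0)) := by
      rw [hKzero]
      exact hKlim.comp (tendsto_nhdsWithin_of_tendsto_nhds_of_eventually_within _ hdz1
        (Filter.Eventually.of_forall fun n => dist_nonneg))
    simpa [hKzero, Function.comp_def] using this
  have hdstep : Tendsto (fun n => dist (f n) (f (n + 1))) atTop (𝓝 0) := by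
    refine squeeze_zero (fun n => dist_nonneg) key ?_
    have : Tendsto (fun n : ℕ => lam ^ n) atTop (𝓝 0) :=
      tendsto_pow_atTop_nhds_zero_of_lt_one hlam_nonneg hlam_lt
    simpa using (tendsto_const_nhds (x := dist u (T u))).mul this
  have hfix : z = T z := by
    have hle : ∀ n, dist z (T z) ≤ dist z (f (n + 1)) +
        (a * dist (f n) z + b * (dist (f n) (f (n + 1)) + dist z (T z))
          + K (dist (f (n + 1)) z)) := by
      intro n
      have h := hcontr (f n) z
      rw [← hfs n] at h
      calc dist z (T z) ≤ dist z (f (n + 1)) + dist (f (n + 1)) (T z) :=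
            dist_triangle _ _ _
        _ ≤ dist z (f (n + 1)) +
            (a * dist (f n) z + b * (dist (f n) (f (n + 1)) + dist z (T z))
              + K (dist (f (n + 1)) z)) := by
            linarith [h]
    have hlim : Tendsto (fun n => dist z (f (n + 1)) +
        (a * dist (f n) z + b * (dist (f n) (f (n + 1)) + dist z (T z))
          + K (dist (f (n + 1)) z))) atTop (𝓝 (b * dist z (T z))) := by
      have h1 : Tendsto (fun n => dist z (f (n + 1))) atTop (𝓝 0) := by
        simpa [dist_comm] using hdz1
      have h2 : Tendsto (fun n => a * dist (f n) z) atTop (𝓝 0) := by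
        simpa using (tendsto_const_nhds (x := a)).mul hdz
      have h3 : Tendsto (fun n => b * (dist (f n) (f (n + 1)) + dist z (T z)))
          atTop (𝓝 (b * dist z (T z))) := by
        have := (tendsto_const_nhds (x := b)).mul
          (hdstep.add (tendsto_const_nhds (x := dist z (T z))))
        simpa using this
      have := (h1.add ((h2.add h3).add hKz))
      simpa using this
    have hfinal : dist z (T z) ≤ b * dist z (T z) := ge_of_tendsto' hlim hle
    have : dist z (T z) = 0 := by nlinarith [dist_nonneg (x := z) (y := T z)]
    exact dist_eq_zero.mp this
  refine ⟨z, hz, hfix, fun n => ?_⟩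
  have := dist_le_of_le_geometric_of_tendsto lam (dist u (T u)) hlam_lt key hz n
  calc dist (f n) z ≤ dist u (T u) * lam ^ n / (1 - lam) := this
    _ = lam ^ n / (1 - lam) * dist u (T u) := by ring
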